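/- arXiv:2203.09117 — 2 statements merged into one kernel-verified Lean document; each statement's English description precedes it below -/
import Mathlib

section
/- Let f : 𝕋 → GLₙ(ℂ) take values in skew-Hermitian invertible matrices and admit a canonical factorization. Then its canonical extension fᵉ to the closed unit disk takes values in skew-Hermitian invertible matrices. -/
section Aux
open Metric Complex

lemma norm_conj' (a : ℂ) : ‖(starRingEnd ℂ) a‖ = ‖a‖ := by
  rw [Complex.norm_conj]

lemma hasDerivWithinAt_conj_comp {g : ℂ → ℂ} {s t : Set ℂ} {z d : ℂ}
    (hmaps : Set.MapsTo (starRingEnd ℂ) s t)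
    (hg : HasDerivWithinAt g d t ((starRingEnd ℂ) z)) :
    HasDerivWithinAt (fun x => (starRingEnd ℂ) (g ((starRingEnd ℂ) x)))
      ((starRingEnd ℂ) d) s z := by
  rw [hasDerivWithinAt_iff_tendsto] at hg ⊢
  have hcont : Filter.Tendsto (starRingEnd ℂ) (nhdsWithin z s)
      (nhdsWithin ((starRingEnd ℂ) z) t) := by
    rw [tendsto_nhdsWithin_iff]
    constructor
    · exact ((Complex.continuous_conj.tendsto z)).mono_left nhdsWithin_le_nhds
    · filter_upwards [self_mem_nhdsWithin] with x hx using hmaps hx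
  refine (hg.comp hcont).congr fun x => ?_
  simp only [Function.comp_apply, smul_eq_mul]
  congr 1
  · rw [← map_sub, norm_conj']
  · rw [show (starRingEnd ℂ) (g ((starRingEnd ℂ) x)) - (starRingEnd ℂ) (g ((starRingEnd ℂ) z))
          - (x - z) * (starRingEnd ℂ) d
        = (starRingEnd ℂ) (g ((starRingEnd ℂ) x) - g ((starRingEnd ℂ) z)
            - ((starRingEnd ℂ) x - (starRingEnd ℂ) z) * d) by
          simp [map_sub, map_mul], norm_conj']

lemma mapsTo_conj_ball : Set.MapsTo (starRingEnd ℂ) (ball (0:ℂ) 1) (ball (0:ℂ) 1) := by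
  intro x hx
  simpa [mem_ball, dist_eq_norm, norm_conj'] using hx

lemma mapsTo_conj_closedBall :
    Set.MapsTo (starRingEnd ℂ) (closedBall (0:ℂ) 1) (closedBall (0:ℂ) 1) := by
  intro x hx
  simpa [mem_closedBall, dist_eq_norm, norm_conj'] using hx

lemma diffOn_conj_comp {g : ℂ → ℂ} (hg : DifferentiableOn ℂ g (ball 0 1)) :
    DifferentiableOn ℂ (fun x => (starRingEnd ℂ) (g ((starRingEnd ℂ) x))) (ball 0 1) := by
  intro z hz
  have hd := (hg _ (mapsTo_conj_ball hz)).hasDerivWithinAt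
  exact (hasDerivWithinAt_conj_comp mapsTo_conj_ball hd).differentiableWithinAt

lemma contOn_conj_comp {g : ℂ → ℂ} (hg : ContinuousOn g (closedBall 0 1)) :
    ContinuousOn (fun x => (starRingEnd ℂ) (g ((starRingEnd ℂ) x))) (closedBall 0 1) :=
  Complex.continuous_conj.comp_continuousOn
    (hg.comp Complex.continuous_conj.continuousOn mapsTo_conj_closedBall)

section MatrixInv
variable {n : ℕ} {s : Set ℂ}

lemma diffOn_det {A : ℂ → Matrix (Fin n) (Fin n) ℂ}
    (h : ∀ i j, DifferentiableOn ℂ (fun z => A z i j) s) :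
    DifferentiableOn ℂ (fun z => (A z).det) s := by
  simp only [Matrix.det_apply']
  apply DifferentiableOn.fun_sum
  intro σ _
  exact DifferentiableOn.const_mul (DifferentiableOn.fun_finset_prod fun i _ => h (σ i) i) _

lemma diffOn_adjugate {A : ℂ → Matrix (Fin n) (Fin n) ℂ}
    (h : ∀ i j, DifferentiableOn ℂ (fun z => A z i j) s) (i j : Fin n) :
    DifferentiableOn ℂ (fun z => (A z).adjugate i j) s := by
  simp only [Matrix.adjugate_apply]
  apply diffOn_det
  intro a b
  by_cases hab : a = j
  · subst hab; simp only [Matrix.updateRow_self]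
    exact differentiableOn_const _
  · simp only [Matrix.updateRow_ne hab]
    exact h a b

lemma diffOn_inv {A : ℂ → Matrix (Fin n) (Fin n) ℂ}
    (h : ∀ i j, DifferentiableOn ℂ (fun z => A z i j) s)
    (hu : ∀ z ∈ s, IsUnit (A z)) (i j : Fin n) :
    DifferentiableOn ℂ (fun z => (A z)⁻¹ i j) s := by
  have key : ∀ z, (A z)⁻¹ i j = ((A z).det)⁻¹ * (A z).adjugate i j := by
    intro z
    rw [Matrix.inv_def, Matrix.smul_apply, Ring.inverse_eq_inv', smul_eq_mul]
  simp only [key]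
  exact DifferentiableOn.mul
    ((diffOn_det h).inv fun z hz =>
      ((Matrix.isUnit_iff_isUnit_det _).mp (hu z hz)).ne_zero)
    (diffOn_adjugate h i j)

lemma contOn_det {A : ℂ → Matrix (Fin n) (Fin n) ℂ} {u : Set ℂ}
    (h : ∀ i j, ContinuousOn (fun z => A z i j) u) :
    ContinuousOn (fun z => (A z).det) u := by
  simp only [Matrix.det_apply']
  apply continuousOn_finset_sum _
  intro σ _
  exact continuousOn_const.mul (continuousOn_finset_prod _ fun i _ => h (σ i) i)

lemma contOn_adjugate {A : ℂ → Matrix (Fin n) (Fin n) ℂ} {u : Set ℂ}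
    (h : ∀ i j, ContinuousOn (fun z => A z i j) u) (i j : Fin n) :
    ContinuousOn (fun z => (A z).adjugate i j) u := by
  simp only [Matrix.adjugate_apply]
  apply contOn_det
  intro a b
  by_cases hab : a = j
  · subst hab; simp only [Matrix.updateRow_self]
    exact continuousOn_const
  · simp only [Matrix.updateRow_ne hab]
    exact h a b

lemma contOn_inv {A : ℂ → Matrix (Fin n) (Fin n) ℂ} {u : Set ℂ}
    (h : ∀ i j, ContinuousOn (fun z => A z i j) u)
    (hu : ∀ z ∈ u, IsUnit (A z)) (i j : Fin n) :
    ContinuousOn (fun z => (A z)⁻¹ i j) u := by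
  have key : ∀ z, (A z)⁻¹ i j = ((A z).det)⁻¹ * (A z).adjugate i j := by
    intro z
    rw [Matrix.inv_def, Matrix.smul_apply, Ring.inverse_eq_inv', smul_eq_mul]
  simp only [key]
  exact ContinuousOn.mul
    ((contOn_det h).inv₀ fun z hz =>
      ((Matrix.isUnit_iff_isUnit_det _).mp (hu z hz)).ne_zero)
    (contOn_adjugate h i j)

end MatrixInv

lemma re_nonpos_of_boundary {g : ℂ → ℂ}
    (hd : DifferentiableOn ℂ g (ball 0 1)) (hc : ContinuousOn g (closedBall 0 1))
    (hb : ∀ z ∈ sphere (0:ℂ) 1, (g z).re ≤ 0) :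
    ∀ z ∈ closedBall (0:ℂ) 1, (g z).re ≤ 0 := by
  have hcl : closure (ball (0:ℂ) 1) = closedBall 0 1 := closure_ball 0 one_ne_zero
  have hfr : frontier (ball (0:ℂ) 1) = sphere 0 1 := frontier_ball 0 one_ne_zero
  intro z hz
  have hdc : DiffContOnCl ℂ (fun z => Complex.exp (g z)) (ball 0 1) :=
    ⟨hd.cexp, by rw [hcl]; exact hc.cexp⟩
  have hle : ‖Complex.exp (g z)‖ ≤ 1 := by
    apply Complex.norm_le_of_forall_mem_frontier_norm_le isBounded_ball hdc ?_
      (by rw [hcl]; exact hz)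
    intro w hw
    rw [hfr] at hw
    rw [Complex.norm_exp]
    exact Real.exp_le_one_iff.mpr (hb w hw)
  rw [Complex.norm_exp] at hle
  exact Real.exp_le_one_iff.mp hle

lemma im_eq_zero_of_boundary {g : ℂ → ℂ}
    (hd : DifferentiableOn ℂ g (ball 0 1)) (hc : ContinuousOn g (closedBall 0 1))
    (hb : ∀ z ∈ sphere (0:ℂ) 1, (g z).im = 0) :
    ∀ z ∈ closedBall (0:ℂ) 1, (g z).im = 0 := by
  intro z hz
  have h1 := re_nonpos_of_boundary (g := fun z => Complex.I * g z)
    (hd.const_mul _) (continuousOn_const.mul hc)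
    (fun w hw => by simp [Complex.mul_re, hb w hw]) z hz
  have h2 := re_nonpos_of_boundary (g := fun z => -(Complex.I * g z))
    ((hd.const_mul _).neg) (continuousOn_const.mul hc).neg
    (fun w hw => by simp [Complex.mul_re, hb w hw]) z hz
  simp only [Complex.mul_re, Complex.I_re, Complex.I_im, Complex.neg_re, zero_mul,
    one_mul, zero_sub, neg_neg] at h1 h2
  linarith

lemma re_eq_zero_of_boundary {g : ℂ → ℂ}
    (hd : DifferentiableOn ℂ g (ball 0 1)) (hc : ContinuousOn g (closedBall 0 1))
    (hb : ∀ z ∈ sphere (0:ℂ) 1, (g z).re = 0) :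
    ∀ z ∈ closedBall (0:ℂ) 1, (g z).re = 0 := by
  intro z hz
  have h1 := re_nonpos_of_boundary hd hc (fun w hw => le_of_eq (hb w hw)) z hz
  have h2 := re_nonpos_of_boundary (g := fun z => -(g z)) hd.neg hc.neg
    (fun w hw => by simp [hb w hw]) z hz
  simp only [Complex.neg_re] at h2
  linarith

lemma boundary_conj_eq {p q : ℂ → ℂ}
    (hpd : DifferentiableOn ℂ p (ball 0 1)) (hpc : ContinuousOn p (closedBall 0 1))
    (hqd : DifferentiableOn ℂ q (ball 0 1)) (hqc : ContinuousOn q (closedBall 0 1))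
    (hb : ∀ z ∈ sphere (0:ℂ) 1, p z = (starRingEnd ℂ) (q z)) :
    ∀ z ∈ closedBall (0:ℂ) 1, p z = (starRingEnd ℂ) (q z) := by
  have hg := im_eq_zero_of_boundary (g := fun z => p z + q z) (hpd.add hqd) (hpc.add hqc)
    (fun w hw => by simp [hb w hw])
  have hh := re_eq_zero_of_boundary (g := fun z => p z - q z) (hpd.sub hqd) (hpc.sub hqc)
    (fun w hw => by simp [hb w hw])
  intro z hz
  have h1 := hg z hz
  have h2 := hh z hz
  simp only [Complex.add_im, Complex.sub_re] at h1 h2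
  apply Complex.ext
  · simp only [Complex.conj_re]; linarith
  · simp only [Complex.conj_im]; linarith

end Aux

open Metric

/-- A canonical (right) factorization `f = f₋ f₊` of a nonsingular matrix function on the
unit circle.  The factor `f₊` extends continuously and invertibly to the closed unit disk,
analytically on the open disk; the factor `f₋` extends continuously and invertibly to the
closed exterior disk including `∞`.  We encode the exterior extension `f₋ᵉ` via the map
`Fm : 𝔻² → GLₙ(ℂ)`, `Fm w = f₋ᵉ(w⁻¹)` (so `Fm 0 = f₋ᵉ(∞)`), which is continuous on the
closed unit disk, analytic on the open disk, and invertible-valued. -/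
structure CanonicalFactorization (n : ℕ) (f : ℂ → Matrix (Fin n) (Fin n) ℂ) : Type where
  Fm : ℂ → Matrix (Fin n) (Fin n) ℂ
  Fp : ℂ → Matrix (Fin n) (Fin n) ℂ
  contOn_m : ContinuousOn Fm (closedBall 0 1)
  contOn_p : ContinuousOn Fp (closedBall 0 1)
  anal_m : ∀ i j, DifferentiableOn ℂ (fun z => Fm z i j) (ball 0 1)
  anal_p : ∀ i j, DifferentiableOn ℂ (fun z => Fp z i j) (ball 0 1)
  unit_m : ∀ z ∈ closedBall (0 : ℂ) 1, IsUnit (Fm z)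
  unit_p : ∀ z ∈ closedBall (0 : ℂ) 1, IsUnit (Fp z)
  factor : ∀ z ∈ sphere (0 : ℂ) 1, f z = Fm z⁻¹ * Fp z


open Matrix in
/-- If `f : 𝕋 → GLₙ(ℂ)` takes values in skew-Hermitian invertible matrices and admits a
canonical factorization `f = f₋ f₊`, then the canonical extension `fᵉ(z) = f₋ᵉ(z̄⁻¹) f₊ᵉ(z)`
to the closed unit disk also takes values in skew-Hermitian invertible matrices. -/
theorem extension_skewHermitian {n : ℕ} (f : ℂ → Matrix (Fin n) (Fin n) ℂ)
    (c : CanonicalFactorization n f)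
    (hskew : ∀ z ∈ sphere (0 : ℂ) 1, (f z)ᴴ = -f z) :
    ∀ z ∈ closedBall (0 : ℂ) 1,
      (c.Fm (starRingEnd ℂ z) * c.Fp z)ᴴ = -(c.Fm (starRingEnd ℂ z) * c.Fp z) ∧
      IsUnit (c.Fm (starRingEnd ℂ z) * c.Fp z) := by
  set J := starRingEnd ℂ with hJ
  -- the auxiliary analytic matrix function P
  set P : ℂ → Matrix (Fin n) (Fin n) ℂ :=
    fun w => (c.Fm w)⁻¹ * (c.Fp (J w))ᴴ with hP
  have hsub : (ball (0:ℂ) 1) ⊆ closedBall 0 1 := ball_subset_closedBall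
  have hum : ∀ w ∈ ball (0:ℂ) 1, IsUnit (c.Fm w) := fun w hw => c.unit_m w (hsub hw)
  -- differentiability of entries of P
  have hFmi_d : ∀ i j, DifferentiableOn ℂ (fun w => (c.Fm w)⁻¹ i j) (ball 0 1) :=
    diffOn_inv c.anal_m hum
  have hFpc_d : ∀ i j, DifferentiableOn ℂ (fun w => (c.Fp (J w))ᴴ i j) (ball 0 1) := by
    intro i j
    simp only [Matrix.conjTranspose_apply, congrFun Complex.star_def, ← hJ]
    exact diffOn_conj_comp (c.anal_p j i)
  have hP_d : ∀ i j, DifferentiableOn ℂ (fun w => P w i j) (ball 0 1) := by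
    intro i j
    simp only [hP, Matrix.mul_apply]
    exact DifferentiableOn.fun_sum fun k _ => (hFmi_d i k).mul (hFpc_d k j)
  -- continuity of entries of P
  have hFm_c : ∀ i j, ContinuousOn (fun z => c.Fm z i j) (closedBall 0 1) := fun i j => by
    exact
      ((continuous_apply j).comp (continuous_apply i)).comp_continuousOn c.contOn_m
  have hFp_c : ∀ i j, ContinuousOn (fun z => c.Fp z i j) (closedBall 0 1) := fun i j => by
    exact
      ((continuous_apply j).comp (continuous_apply i)).comp_continuousOn c.contOn_p
  have hFmi_c : ∀ i j, ContinuousOn (fun w => (c.Fm w)⁻¹ i j) (closedBall 0 1) :=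
    contOn_inv hFm_c c.unit_m
  have hFpc_c : ∀ i j, ContinuousOn (fun w => (c.Fp (J w))ᴴ i j) (closedBall 0 1) := by
    intro i j
    simp only [Matrix.conjTranspose_apply, congrFun Complex.star_def, ← hJ]
    exact contOn_conj_comp (hFp_c j i)
  have hP_c : ∀ i j, ContinuousOn (fun w => P w i j) (closedBall 0 1) := by
    intro i j
    simp only [hP, Matrix.mul_apply]
    exact continuousOn_finset_sum _ fun k _ => (hFmi_c i k).mul (hFpc_c k j)
  -- P is skew-Hermitian on the sphere
  have hPs : ∀ w ∈ sphere (0:ℂ) 1, (P w)ᴴ = -(P w) := by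
    intro w hw
    have hwn : ‖w‖ = 1 := by simpa using mem_sphere_zero_iff_norm.mp hw
    have hJw_s : J w ∈ sphere (0:ℂ) 1 := by
      rw [mem_sphere_zero_iff_norm, norm_conj']
      exact mem_sphere_zero_iff_norm.mp hw
    have hJw : (J w)⁻¹ = w := by
      apply inv_eq_of_mul_eq_one_right
      rw [hJ, mul_comm]
      rw [Complex.mul_conj, Complex.normSq_eq_norm_sq, hwn]
      norm_num
    have hA : IsUnit (c.Fm w) := c.unit_m w (sphere_subset_closedBall hw)
    have hAdet : IsUnit (c.Fm w).det := (Matrix.isUnit_iff_isUnit_det _).mp hA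
    have hAHdet : IsUnit (c.Fm w)ᴴ.det := by
      rw [Matrix.det_conjTranspose]; exact hAdet.star
    set A := c.Fm w
    set B := c.Fp (J w)
    have hfac : f (J w) = A * B := by
      rw [c.factor (J w) hJw_s, hJw]
    have hsk : Bᴴ * Aᴴ = -(A * B) := by
      rw [← Matrix.conjTranspose_mul, ← hfac, hskew (J w) hJw_s, hfac]
    have hAHinv : Aᴴ * (Aᴴ)⁻¹ = 1 := Matrix.mul_nonsing_inv _ hAHdet
    have hAinv : A⁻¹ * A = 1 := Matrix.nonsing_inv_mul _ hAdet
    have key : A⁻¹ * (Bᴴ * Aᴴ) * (Aᴴ)⁻¹ = A⁻¹ * (-(A * B)) * (Aᴴ)⁻¹ := by rw [hsk]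
    have lhs : A⁻¹ * (Bᴴ * Aᴴ) * (Aᴴ)⁻¹ = A⁻¹ * Bᴴ := by
      simp only [Matrix.mul_assoc, hAHinv, Matrix.mul_one]
    have rhs : A⁻¹ * (-(A * B)) * (Aᴴ)⁻¹ = -(B * (Aᴴ)⁻¹) := by
      simp only [Matrix.mul_neg, Matrix.neg_mul, ← Matrix.mul_assoc, hAinv, Matrix.one_mul]
    show (A⁻¹ * Bᴴ)ᴴ = -(A⁻¹ * Bᴴ)
    rw [Matrix.conjTranspose_mul, Matrix.conjTranspose_nonsing_inv,
      Matrix.conjTranspose_conjTranspose, ← lhs, key, rhs, neg_neg]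
  -- propagate skewness to the closed ball via the boundary principle
  have hentry : ∀ i j, ∀ w ∈ closedBall (0:ℂ) 1, P w i j = J (-(P w j i)) := by
    intro i j
    apply boundary_conj_eq (hP_d i j) (hP_c i j) ((hP_d j i).neg) ((hP_c j i).neg)
    intro w hw
    have h := congrFun (congrFun (hPs w hw) i) j
    rw [Matrix.conjTranspose_apply, Matrix.neg_apply] at h
    calc P w i j = -(star (P w j i)) := by rw [h, neg_neg]
      _ = J (-(P w j i)) := by rw [hJ, map_neg, starRingEnd_apply]
  have hPcb : ∀ w ∈ closedBall (0:ℂ) 1, (P w)ᴴ = -(P w) := by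
    intro w hw
    ext i j
    rw [Matrix.conjTranspose_apply, Matrix.neg_apply]
    have h := hentry i j w hw
    rw [hJ, map_neg, starRingEnd_apply] at h
    rw [h, neg_neg]
  -- conclude
  intro z hz
  refine ⟨?_, (c.unit_m _ (mapsTo_conj_closedBall hz)).mul (c.unit_p z hz)⟩
  have hw : J z ∈ closedBall (0:ℂ) 1 := mapsTo_conj_closedBall hz
  have hPz := hPcb (J z) hw
  set A := c.Fm (J z) with hA
  have hJJ : J (J z) = z := Complex.conj_conj z
  have hPJ : P (J z) = A⁻¹ * (c.Fp z)ᴴ := by simp only [hP]; rw [hJJ]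
  set B := c.Fp z with hB
  rw [hPJ] at hPz
  have hAu : IsUnit A := c.unit_m _ hw
  have hAdet : IsUnit A.det := (Matrix.isUnit_iff_isUnit_det _).mp hAu
  have hAHdet : IsUnit Aᴴ.det := by rw [Matrix.det_conjTranspose]; exact hAdet.star
  have hPz' : B * (Aᴴ)⁻¹ = -(A⁻¹ * Bᴴ) := by
    rw [← hPz, Matrix.conjTranspose_mul, Matrix.conjTranspose_nonsing_inv,
      Matrix.conjTranspose_conjTranspose]
  have hAHinv : (Aᴴ)⁻¹ * Aᴴ = 1 := Matrix.nonsing_inv_mul _ hAHdet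
  have hAinv : A * A⁻¹ = 1 := Matrix.mul_nonsing_inv _ hAdet
  have lhs : A * (B * (Aᴴ)⁻¹) * Aᴴ = A * B := by
    simp only [Matrix.mul_assoc, hAHinv, Matrix.mul_one]
  have rhs : A * (-(A⁻¹ * Bᴴ)) * Aᴴ = -(Bᴴ * Aᴴ) := by
    simp only [Matrix.mul_neg, Matrix.neg_mul, ← Matrix.mul_assoc, hAinv, Matrix.one_mul]
  have key : A * (B * (Aᴴ)⁻¹) * Aᴴ = A * (-(A⁻¹ * Bᴴ)) * Aᴴ := by rw [hPz']
  rw [lhs, rhs] at key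
  rw [Matrix.conjTranspose_mul, key, neg_neg]
end

section
/- Let 𝒞 be an antiunitary operator on ℂⁿ with 𝒞² = ±1, and let f : 𝕋 → GLₙ(ℂ) satisfy f(z) = 𝒞 f(z̄) 𝒞* for all z ∈ 𝕋 and admit a canonical factorization. Then the canonical extension fᵉ : 𝔻² → GLₙ(ℂ) satisfies fᵉ(z) = 𝒞 fᵉ(z̄) 𝒞* for all z ∈ 𝔻². -/
open Metric

section AuxProof

open Metric Complex Topology Filter
local notation "conj'" => starRingEnd ℂ


lemma conj_mem_ball {z : ℂ} (h : z ∈ ball (0:ℂ) 1) : conj' z ∈ ball (0:ℂ) 1 := by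
  simpa [mem_ball_zero_iff] using h

lemma conj_mem_closedBall {z : ℂ} (h : z ∈ closedBall (0:ℂ) 1) :
    conj' z ∈ closedBall (0:ℂ) 1 := by
  simpa [mem_closedBall_zero_iff] using h

lemma conj_mem_sphere {z : ℂ} (h : z ∈ sphere (0:ℂ) 1) : conj' z ∈ sphere (0:ℂ) 1 := by
  simpa [mem_sphere_zero_iff_norm] using h

lemma hasDerivAt_reflect {v : ℂ → ℂ} {d z : ℂ} (hv : HasDerivAt v d (conj' z)) :
    HasDerivAt (fun w => conj' (v (conj' w))) (conj' d) z := by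
  rw [hasDerivAt_iff_tendsto_slope] at hv ⊢
  have h1 : Filter.Tendsto conj' (𝓝[≠] z) (𝓝[≠] (conj' z)) := by
    refine tendsto_nhdsWithin_of_tendsto_nhds_of_eventually_within _
      ((Complex.continuous_conj.tendsto z).mono_left nhdsWithin_le_nhds) ?_
    filter_upwards [self_mem_nhdsWithin] with w hw
    simp only [Set.mem_compl_iff, Set.mem_singleton_iff] at hw ⊢
    exact fun h => hw (by simpa using congrArg conj' h)
  have h2 := (Complex.continuous_conj.tendsto d).comp (hv.comp h1)
  refine h2.congr' ?_
  filter_upwards [self_mem_nhdsWithin] with w hw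
  simp only [Function.comp_apply, slope_def_field]
  rw [map_div₀, map_sub, map_sub]
  simp





lemma differentiableOn_reflect {v : ℂ → ℂ} (hv : DifferentiableOn ℂ v (ball (0:ℂ) 1)) :
    DifferentiableOn ℂ (fun w => conj' (v (conj' w))) (ball (0:ℂ) 1) := by
  intro z hz
  have hz' : conj' z ∈ ball (0:ℂ) 1 := conj_mem_ball hz
  have h := (hv.differentiableAt (isOpen_ball.mem_nhds hz')).hasDerivAt
  exact (hasDerivAt_reflect h).differentiableAt.differentiableWithinAt

lemma continuousOn_reflect {v : ℂ → ℂ} (hv : ContinuousOn v (closedBall (0:ℂ) 1)) :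
    ContinuousOn (fun w => conj' (v (conj' w))) (closedBall (0:ℂ) 1) := by
  refine Complex.continuous_conj.comp_continuousOn ?_
  exact hv.comp Complex.continuous_conj.continuousOn fun z hz => conj_mem_closedBall hz

lemma eqOn_closedBall_of_eqOn_ball {g : ℂ → ℂ} (hg : ContinuousOn g (closedBall (0:ℂ) 1))
    {a : ℂ} (h : ∀ z ∈ ball (0:ℂ) 1, g z = a) : ∀ z ∈ closedBall (0:ℂ) 1, g z = a := by
  intro z hz
  have hzc : z ∈ closure (ball (0:ℂ) 1) := by rwa [closure_ball (0:ℂ) one_ne_zero]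
  have hne : (𝓝[ball (0:ℂ) 1] z).NeBot := mem_closure_iff_nhdsWithin_neBot.mp hzc
  have ht : Filter.Tendsto g (𝓝[ball (0:ℂ) 1] z) (𝓝 (g z)) :=
    ((hg z hz).mono ball_subset_closedBall)
  have ht2 : Filter.Tendsto g (𝓝[ball (0:ℂ) 1] z) (𝓝 a) :=
    Filter.Tendsto.congr' (by
      filter_upwards [self_mem_nhdsWithin] with w hw
      exact (h w hw).symm) tendsto_const_nhds
  exact tendsto_nhds_unique ht ht2

lemma const_of_im_zero_on_sphere {p : ℂ → ℂ} (hp : DiffContOnCl ℂ p (ball (0:ℂ) 1))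
    (hb : ∀ z ∈ sphere (0:ℂ) 1, (p z).im = 0) :
    ∀ z ∈ closedBall (0:ℂ) 1, p z = p 0 := by
  have hcball : closure (ball (0:ℂ) 1) = closedBall 0 1 := closure_ball (0:ℂ) one_ne_zero
  have hfr : frontier (ball (0:ℂ) 1) = sphere 0 1 := frontier_ball (0:ℂ) one_ne_zero
  have hpc : ContinuousOn p (closedBall (0:ℂ) 1) := hcball ▸ hp.continuousOn
  -- step 1 : im p = 0 on closedBall
  have him : ∀ z ∈ closedBall (0:ℂ) 1, (p z).im = 0 := by
    intro z hz
    have hz' : z ∈ closure (ball (0:ℂ) 1) := hcball ▸ hz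
    have key : ∀ s : ℝ, Real.exp (-(s * (p z).im)) ≤ 1 := by
      intro s
      have hnorm : ∀ w : ℂ, ‖Complex.exp ((s:ℂ) * Complex.I * p w)‖
          = Real.exp (-(s * (p w).im)) := by
        intro w
        rw [Complex.norm_exp]
        congr 1
        simp [Complex.mul_re, Complex.mul_im]
      have d1 : DiffContOnCl ℂ (fun w => Complex.exp ((s:ℂ) * Complex.I * p w)) (ball 0 1) := by
        constructor
        · exact ((hp.differentiableOn.const_mul ((s:ℂ) * Complex.I))).cexp
        · exact (hp.continuousOn.const_smul ((s:ℂ) * Complex.I)).cexp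
      have e1 := Complex.norm_le_of_forall_mem_frontier_norm_le isBounded_ball d1 (C := 1)
        (fun w hw => by
          rw [hfr] at hw
          rw [hnorm w, hb w hw]
          simp) hz'
      rw [← hnorm z]; exact e1
    have k1 := Real.exp_le_one_iff.mp (key 1)
    have k2 := Real.exp_le_one_iff.mp (key (-1))
    simp only [one_mul, neg_nonpos] at k1
    simp only [neg_mul, one_mul, neg_neg] at k2
    linarith [k1, k2]
  -- step 2 : p constant on ball
  have hconst : ∀ z ∈ ball (0:ℂ) 1, p z = p 0 := by
    have ha : AnalyticOnNhd ℂ p (ball 0 1) := hp.differentiableOn.analyticOnNhd isOpen_ball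
    rcases ha.is_constant_or_isOpen (convex_ball _ _).isPreconnected with ⟨w, hw⟩ | hopen
    · intro z hz; rw [hw z hz, hw 0 (by simp)]
    · exfalso
      have ho := hopen (ball 0 1) subset_rfl isOpen_ball
      have h0 : p 0 ∈ p '' ball 0 1 := ⟨0, by simp, rfl⟩
      rcases Metric.isOpen_iff.mp ho _ h0 with ⟨r, hr, hball⟩
      have hmem : p 0 + (r/2 : ℝ) * Complex.I ∈ ball (p 0) r := by
        simp only [mem_ball, dist_eq_norm, add_sub_cancel_left]
        rw [norm_mul, Complex.norm_real, Complex.norm_I, mul_one, Real.norm_eq_abs,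
          abs_of_pos (by linarith : (0:ℝ) < r / 2)]
        linarith
      rcases hball hmem with ⟨w, hw1, hw2⟩
      have hiw := him w (ball_subset_closedBall hw1)
      have hi0 := him 0 (by simp)
      rw [hw2] at hiw
      simp only [Complex.add_im, Complex.mul_im, Complex.ofReal_re, Complex.ofReal_im,
        Complex.I_im, Complex.I_re, hi0] at hiw
      -- hiw : 0 + (r/2 * 1 + 0 * 0) = 0
      have : r / 2 = 0 := by linarith [hiw]
      linarith
  exact eqOn_closedBall_of_eqOn_ball hpc hconst




lemma diffContOnCl_of (u : ℂ → ℂ) (h1 : DifferentiableOn ℂ u (ball (0:ℂ) 1))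
    (h2 : ContinuousOn u (closedBall (0:ℂ) 1)) : DiffContOnCl ℂ u (ball (0:ℂ) 1) :=
  ⟨h1, by rwa [closure_ball (0:ℂ) one_ne_zero]⟩

lemma scalar_rigid {u v : ℂ → ℂ}
    (hud : DifferentiableOn ℂ u (ball (0:ℂ) 1)) (huc : ContinuousOn u (closedBall (0:ℂ) 1))
    (hvd : DifferentiableOn ℂ v (ball (0:ℂ) 1)) (hvc : ContinuousOn v (closedBall (0:ℂ) 1))
    (hb : ∀ z ∈ sphere (0:ℂ) 1, u z = v (conj' z)) :
    ∀ z ∈ closedBall (0:ℂ) 1, ∀ w ∈ closedBall (0:ℂ) 1, u z = v w := by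
  set vt : ℂ → ℂ := fun w => conj' (v (conj' w)) with hvt
  have hvtd : DifferentiableOn ℂ vt (ball (0:ℂ) 1) := differentiableOn_reflect hvd
  have hvtc : ContinuousOn vt (closedBall (0:ℂ) 1) := continuousOn_reflect hvc
  have hvtb : ∀ z ∈ sphere (0:ℂ) 1, vt z = conj' (u z) := by
    intro z hz
    rw [hvt]
    simp only
    rw [← hb z hz]
  have hsum : ∀ z ∈ closedBall (0:ℂ) 1, u z + vt z = u 0 + vt 0 := by
    refine const_of_im_zero_on_sphere
      (diffContOnCl_of _ (hud.add hvtd) (huc.add hvtc)) ?_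
    intro z hz
    rw [hvtb z hz]
    simp [Complex.add_im]
  have hdiff : ∀ z ∈ closedBall (0:ℂ) 1,
      -Complex.I * (u z - vt z) = -Complex.I * (u 0 - vt 0) := by
    refine const_of_im_zero_on_sphere
      (diffContOnCl_of _ ((hud.sub hvtd).const_mul _) (continuousOn_const.mul (huc.sub hvtc))) ?_
    intro z hz
    rw [hvtb z hz]
    simp [Complex.mul_im, Complex.sub_im, Complex.sub_re]
  have huconst : ∀ z ∈ closedBall (0:ℂ) 1, u z = u 0 := by
    intro z hz
    have h1 := hsum z hz
    have h2 := mul_left_cancel₀ (by simp [Complex.I_ne_zero] : -Complex.I ≠ 0) (hdiff z hz)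
    linear_combination (h1 + h2) / 2
  have hvtconst : ∀ z ∈ closedBall (0:ℂ) 1, vt z = vt 0 := by
    intro z hz
    have h1 := hsum z hz
    have h2 := mul_left_cancel₀ (by simp [Complex.I_ne_zero] : -Complex.I ≠ 0) (hdiff z hz)
    linear_combination (h1 - h2) / 2
  have hvconst : ∀ w ∈ closedBall (0:ℂ) 1, v w = v 0 := by
    intro w hw
    have h1 := hvtconst (conj' w) (conj_mem_closedBall hw)
    have : conj' (v (conj' (conj' w))) = conj' (v (conj' (0:ℂ))) := h1
    simp only [Complex.conj_conj, map_zero] at this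
    have := congrArg conj' this
    simpa using this
  have h1s : (1:ℂ) ∈ sphere (0:ℂ) 1 := by simp
  have h1c : (1:ℂ) ∈ closedBall (0:ℂ) 1 := by simp
  have hkey : u 0 = v 0 := by
    have := hb 1 h1s
    rw [map_one] at this
    rw [← huconst 1 h1c, ← hvconst 1 h1c]
    exact this
  intro z hz w hw
  rw [huconst z hz, hvconst w hw, hkey]




variable {n : ℕ}

def MHol (M : ℂ → Matrix (Fin n) (Fin n) ℂ) : Prop :=
  (∀ i j, DifferentiableOn ℂ (fun z => M z i j) (ball (0:ℂ) 1)) ∧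
  (∀ i j, ContinuousOn (fun z => M z i j) (closedBall (0:ℂ) 1))

lemma MHol.const (A : Matrix (Fin n) (Fin n) ℂ) : MHol (fun _ => A) :=
  ⟨fun _ _ => differentiableOn_const _, fun _ _ => continuousOn_const⟩

lemma MHol.mul {M N : ℂ → Matrix (Fin n) (Fin n) ℂ} (hM : MHol M) (hN : MHol N) :
    MHol (fun z => M z * N z) := by
  constructor <;> intro i j <;>
    [ (refine DifferentiableOn.congr (f := fun z => ∑ k, M z i k * N z k j) ?_
         (fun z _ => Matrix.mul_apply);
       exact DifferentiableOn.fun_sum fun k _ => (hM.1 i k).mul (hN.1 k j));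
      (refine ContinuousOn.congr (f := fun z => ∑ k, M z i k * N z k j) ?_
         (fun z _ => Matrix.mul_apply);
       exact continuousOn_finset_sum _ fun k _ => (hM.2 i k).mul (hN.2 k j))]

lemma MHol.det {M : ℂ → Matrix (Fin n) (Fin n) ℂ} (hM : MHol M) :
    DifferentiableOn ℂ (fun z => (M z).det) (ball (0:ℂ) 1) ∧
    ContinuousOn (fun z => (M z).det) (closedBall (0:ℂ) 1) := by
  constructor
  · refine DifferentiableOn.congr
      (f := fun z => ∑ σ : Equiv.Perm (Fin n),
        ((Equiv.Perm.sign σ : ℤ) : ℂ) * ∏ i, M z (σ i) i) ?_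
      (fun z _ => Matrix.det_apply' (M z))
    exact DifferentiableOn.fun_sum fun σ _ =>
      (DifferentiableOn.fun_finsetProd fun i _ => hM.1 (σ i) i).const_mul _
  · refine ContinuousOn.congr
      (f := fun z => ∑ σ : Equiv.Perm (Fin n),
        ((Equiv.Perm.sign σ : ℤ) : ℂ) * ∏ i, M z (σ i) i) ?_
      (fun z _ => Matrix.det_apply' (M z))
    exact continuousOn_finset_sum _ fun σ _ =>
      continuousOn_const.mul (continuousOn_finset_prod _ fun i _ => hM.2 (σ i) i)

lemma MHol.updateRow {M : ℂ → Matrix (Fin n) (Fin n) ℂ} (hM : MHol M) (j : Fin n)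
    (r : Fin n → ℂ) : MHol (fun z => (M z).updateRow j r) := by
  constructor <;> intro k l <;>
    simp only [Matrix.updateRow_apply] <;> split_ifs
  · exact differentiableOn_const _
  · exact hM.1 k l
  · exact continuousOn_const
  · exact hM.2 k l

lemma MHol.inv {M : ℂ → Matrix (Fin n) (Fin n) ℂ} (hM : MHol M)
    (hU : ∀ z ∈ closedBall (0:ℂ) 1, IsUnit (M z)) : MHol (fun z => (M z)⁻¹) := by
  have hdet : ∀ z ∈ closedBall (0:ℂ) 1, (M z).det ≠ 0 := fun z hz =>
    isUnit_iff_ne_zero.mp ((Matrix.isUnit_iff_isUnit_det _).mp (hU z hz))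
  have hinv : ∀ z, (M z)⁻¹ = (M z).det⁻¹ • (M z).adjugate := by
    intro z; rw [Matrix.inv_def, Ring.inverse_eq_inv]
  have hadj : MHol (fun z => (M z).adjugate) := by
    constructor <;> intro k l
    · refine DifferentiableOn.congr
        (f := fun z => ((M z).updateRow l (Pi.single k 1)).det) ?_
        (fun z _ => (Matrix.adjugate_apply (M z) k l))
      exact (MHol.det (hM.updateRow l (Pi.single k 1))).1
    · refine ContinuousOn.congr
        (f := fun z => ((M z).updateRow l (Pi.single k 1)).det) ?_
        (fun z _ => (Matrix.adjugate_apply (M z) k l))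
      exact (MHol.det (hM.updateRow l (Pi.single k 1))).2
  constructor <;> intro i j
  · refine DifferentiableOn.congr (f := fun z => (M z).det⁻¹ * (M z).adjugate i j) ?_
      (fun z _ => by simp only []; rw [hinv z, Matrix.smul_apply, smul_eq_mul])
    exact (((hM.det).1.inv (fun z hz => hdet z (ball_subset_closedBall hz)))).mul
      (hadj.1 i j)
  · refine ContinuousOn.congr (f := fun z => (M z).det⁻¹ * (M z).adjugate i j) ?_
      (fun z _ => by simp only []; rw [hinv z, Matrix.smul_apply, smul_eq_mul])
    exact (((hM.det).2.inv₀ hdet)).mul (hadj.2 i j)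

lemma MHol.reflect {M : ℂ → Matrix (Fin n) (Fin n) ℂ} (hM : MHol M) :
    MHol (fun z => (M (conj' z)).map conj') := by
  constructor <;> intro i j <;> simp only [Matrix.map_apply]
  · exact differentiableOn_reflect (hM.1 i j)
  · exact continuousOn_reflect (hM.2 i j)



end AuxProof

section MainProof
open Matrix
local notation "conj'" => starRingEnd ℂ
/-- Let `𝒞` be an antiunitary operator on `ℂⁿ` with `𝒞² = ±1`; we write it as
`𝒞 v = C (conj v)` with `C` a unitary matrix, so that `Ad_𝒞 x = C (x̄) C*` (entrywise
conjugate) and `𝒞² = ±1` reads `C C̄ = ±1`.  If `f : 𝕋 → GLₙ(ℂ)` satisfies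
`f(z) = 𝒞 f(z̄) 𝒞*` and admits a canonical factorization, then its canonical extension
`fᵉ(z) = f₋ᵉ(z̄⁻¹) f₊ᵉ(z)` satisfies `fᵉ(z) = 𝒞 fᵉ(z̄) 𝒞*` on the closed unit disk.
(Note `fᵉ(z̄) = Fm z * Fp (conj z)`.) -/
theorem extension_real_equivariant {n : ℕ} (f : ℂ → Matrix (Fin n) (Fin n) ℂ)
    (c : CanonicalFactorization n f)
    (C : Matrix (Fin n) (Fin n) ℂ) (hC : Cᴴ * C = 1 ∧ C * Cᴴ = 1)
    (ε : ℂ) (hε : ε = 1 ∨ ε = -1)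
    (hC2 : C * C.map (starRingEnd ℂ) = ε • (1 : Matrix (Fin n) (Fin n) ℂ))
    (hf : ∀ z ∈ sphere (0 : ℂ) 1,
      f z = C * (f (starRingEnd ℂ z)).map (starRingEnd ℂ) * Cᴴ) :
    ∀ z ∈ closedBall (0 : ℂ) 1,
      c.Fm (starRingEnd ℂ z) * c.Fp z =
        C * ((c.Fm z * c.Fp (starRingEnd ℂ z)).map (starRingEnd ℂ)) * Cᴴ := by
  classical
  set Fm := c.Fm with hFmdef
  set Fp := c.Fp with hFpdef
  set Ad : Matrix (Fin n) (Fin n) ℂ → Matrix (Fin n) (Fin n) ℂ :=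
    fun A => C * A.map conj' * Cᴴ with hAd
  have Ad_mul : ∀ A B, Ad A * Ad B = Ad (A * B) := by
    intro A B
    show C * A.map conj' * Cᴴ * (C * B.map conj' * Cᴴ) = C * (A * B).map conj' * Cᴴ
    rw [Matrix.map_mul]
    simp only [Matrix.mul_assoc]
    rw [← Matrix.mul_assoc Cᴴ C, hC.1, Matrix.one_mul]
  have Ad_one : Ad 1 = 1 := by
    show C * (1 : Matrix (Fin n) (Fin n) ℂ).map conj' * Cᴴ = 1
    rw [Matrix.map_one conj' (map_zero _) (map_one _), Matrix.mul_one, hC.2]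
  -- inverse facts
  have hmulinv_p : ∀ z ∈ closedBall (0:ℂ) 1, Fp z * (Fp z)⁻¹ = 1 := fun z hz =>
    Matrix.mul_nonsing_inv _ ((Matrix.isUnit_iff_isUnit_det _).mp (c.unit_p z hz))
  have hinvmul_p : ∀ z ∈ closedBall (0:ℂ) 1, (Fp z)⁻¹ * Fp z = 1 := fun z hz =>
    Matrix.nonsing_inv_mul _ ((Matrix.isUnit_iff_isUnit_det _).mp (c.unit_p z hz))
  have hmulinv_m : ∀ z ∈ closedBall (0:ℂ) 1, Fm z * (Fm z)⁻¹ = 1 := fun z hz =>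
    Matrix.mul_nonsing_inv _ ((Matrix.isUnit_iff_isUnit_det _).mp (c.unit_m z hz))
  have hinvmul_m : ∀ z ∈ closedBall (0:ℂ) 1, (Fm z)⁻¹ * Fm z = 1 := fun z hz =>
    Matrix.nonsing_inv_mul _ ((Matrix.isUnit_iff_isUnit_det _).mp (c.unit_m z hz))
  -- sphere facts
  have hsc : ∀ z ∈ sphere (0:ℂ) 1, z⁻¹ = conj' z := by
    intro z hz
    have hn : ‖z‖ = 1 := mem_sphere_zero_iff_norm.mp hz
    have : z * conj' z = 1 := by
      rw [Complex.mul_conj]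
      norm_cast
      rw [Complex.normSq_eq_norm_sq, hn]
      norm_num
    exact inv_eq_of_mul_eq_one_right this
  -- key sphere identity
  have E : ∀ z ∈ sphere (0:ℂ) 1,
      Fm (conj' z) * Fp z = Ad (Fm z) * Ad (Fp (conj' z)) := by
    intro z hz
    have h1 := c.factor z hz
    rw [hsc z hz] at h1
    have h2 := c.factor (conj' z) (conj_mem_sphere hz)
    rw [hsc (conj' z) (conj_mem_sphere hz), Complex.conj_conj] at h2
    have h3 := hf z hz
    rw [h2] at h3
    rw [← h1, Ad_mul, h3]
  -- the two auxiliary matrix functions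
  set K : ℂ → Matrix (Fin n) (Fin n) ℂ := fun w => Ad ((Fm (conj' w))⁻¹) * Fm w with hK
  set H : ℂ → Matrix (Fin n) (Fin n) ℂ := fun z => Ad (Fp (conj' z)) * (Fp z)⁻¹ with hH
  have hFmH : MHol Fm := ⟨c.anal_m, fun i j =>
    (continuous_apply j).comp_continuousOn ((continuous_apply i).comp_continuousOn c.contOn_m)⟩
  have hFpH : MHol Fp := ⟨c.anal_p, fun i j =>
    (continuous_apply j).comp_continuousOn ((continuous_apply i).comp_continuousOn c.contOn_p)⟩
  have hHH : MHol H :=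
    (((MHol.const C).mul hFpH.reflect).mul (MHol.const Cᴴ)).mul (hFpH.inv c.unit_p)
  have hKH : MHol K :=
    (((MHol.const C).mul ((hFmH.inv c.unit_m).reflect)).mul (MHol.const Cᴴ)).mul hFmH
  -- boundary identity H z = K (conj' z) on the sphere
  have hbdy : ∀ z ∈ sphere (0:ℂ) 1, H z = K (conj' z) := by
    intro z hz
    have hzc : z ∈ closedBall (0:ℂ) 1 := sphere_subset_closedBall hz
    have hzc' : conj' z ∈ closedBall (0:ℂ) 1 := conj_mem_closedBall hzc
    have e := congrArg (fun X => Ad ((Fm z)⁻¹) * X * (Fp z)⁻¹) (E z hz)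
    calc H z = Ad (Fp (conj' z)) * (Fp z)⁻¹ := rfl
      _ = (Ad ((Fm z)⁻¹) * Ad (Fm z)) * Ad (Fp (conj' z)) * (Fp z)⁻¹ := by
          rw [Ad_mul, hinvmul_m z hzc, Ad_one, Matrix.one_mul]
      _ = Ad ((Fm z)⁻¹) * (Ad (Fm z) * Ad (Fp (conj' z))) * (Fp z)⁻¹ := by
          rw [Matrix.mul_assoc (Ad ((Fm z)⁻¹))]
      _ = Ad ((Fm z)⁻¹) * (Fm (conj' z) * Fp z) * (Fp z)⁻¹ := by rw [← E z hz]
      _ = Ad ((Fm z)⁻¹) * Fm (conj' z) * (Fp z * (Fp z)⁻¹) := by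
          simp only [Matrix.mul_assoc]
      _ = Ad ((Fm z)⁻¹) * Fm (conj' z) := by rw [hmulinv_p z hzc, Matrix.mul_one]
      _ = K (conj' z) := by rw [hK]; simp only [Complex.conj_conj]
  -- rigidity
  have hHK : ∀ z ∈ closedBall (0:ℂ) 1, H z = K (conj' z) := by
    intro z hz
    ext i j
    exact scalar_rigid (hHH.1 i j) (hHH.2 i j) (hKH.1 i j) (hKH.2 i j)
      (fun w hw => by rw [hbdy w hw]) z hz (conj' z) (conj_mem_closedBall hz)
  -- conclusion
  intro z hz
  have hzc' : conj' z ∈ closedBall (0:ℂ) 1 := conj_mem_closedBall hz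
  have h := hHK z hz
  rw [hK] at h
  simp only [Complex.conj_conj] at h
  -- h : H z = Ad ((Fm z)⁻¹) * Fm (conj' z)
  have e := congrArg (fun X => Ad (Fm z) * X * Fp z) h
  show Fm (conj' z) * Fp z = Ad (Fm z * Fp (conj' z))
  rw [← Ad_mul]
  calc Fm (conj' z) * Fp z
      = (Ad (Fm z) * Ad ((Fm z)⁻¹)) * Fm (conj' z) * Fp z := by
        rw [Ad_mul, hmulinv_m z hz, Ad_one, Matrix.one_mul]
    _ = Ad (Fm z) * (Ad ((Fm z)⁻¹) * Fm (conj' z)) * Fp z := by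
        rw [Matrix.mul_assoc (Ad (Fm z))]
    _ = Ad (Fm z) * H z * Fp z := by rw [← h]
    _ = Ad (Fm z) * Ad (Fp (conj' z)) * ((Fp z)⁻¹ * Fp z) := by
        rw [hH]; simp only [Matrix.mul_assoc]
    _ = Ad (Fm z) * Ad (Fp (conj' z)) := by rw [hinvmul_p z hz, Matrix.mul_one]

end MainProof
end
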